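/- Let 𝐀 be a symmetric matrix over GF(2) whose rows and columns are indexed by a finite set E. Then every feasible set of D(𝐀) has even cardinality (i.e., D(𝐀) is even) if and only if every diagonal entry of 𝐀 is zero. -/

import Mathlib

/-!
Statement 4: For a symmetric matrix `𝐀` over GF(2) indexed by a finite set `E`, the set
system `D(𝐀)` is even (every feasible set has even cardinality) if and only if every
diagonal entry of `𝐀` is zero.
-/

/-- The feasible sets of the set system `D(𝐀)` determined by a matrix `𝐀` with rows
and columns indexed by `E`: a set `X` is feasible precisely when the principal
submatrix `𝐀[X]` is nonsingular (the empty submatrix has determinant `1`, so `∅` is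
feasible by convention). -/
def matFeasible {E : Type*} [Fintype E] [DecidableEq E] {K : Type*} [Field K]
    (A : Matrix E E K) : Set (Finset E) :=
  {X | (A.submatrix (fun i : X => (i : E)) (fun j : X => (j : E))).det ≠ 0}

/-- An involutive permutation of a finite type of odd cardinality has a fixed point. -/
lemma invol_exists_fixed {n : Type*} [Fintype n] [DecidableEq n] (σ : Equiv.Perm n)
    (h : σ⁻¹ = σ) (hodd : Odd (Fintype.card n)) : ∃ i, σ i = i := by
  by_contra hfix
  push_neg at hfix
  have hsq : ∀ a : n, σ (σ a) = a := by
    intro a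
    nth_rewrite 1 [← h]
    exact σ.symm_apply_apply a
  have hsum : ∑ _i : n, (1 : ZMod 2) = 0 := by
    apply Finset.sum_ninvolution (g := fun i => σ i)
    · intro a; decide
    · intro a _; exact hfix a
    · intro a; exact Finset.mem_univ _
    · exact hsq
  simp only [Finset.sum_const, Finset.card_univ, nsmul_eq_mul, mul_one] at hsum
  have h2 : (2 : ℕ) ∣ Fintype.card n :=
    (ZMod.natCast_eq_zero_iff _ 2).mp hsum
  exact absurd (even_iff_two_dvd.mpr h2) (Nat.not_even_iff_odd.mpr hodd)

/-- A symmetric matrix over GF(2) with zero diagonal of odd size is singular. -/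
lemma det_eq_zero_of_odd {n : Type*} [Fintype n] [DecidableEq n] (A : Matrix n n (ZMod 2))
    (hsym : ∀ i j, A j i = A i j) (hdiag : ∀ i, A i i = 0)
    (hodd : Odd (Fintype.card n)) : A.det = 0 := by
  rw [Matrix.det_apply]
  have hterm : ∀ σ : Equiv.Perm n,
      Equiv.Perm.sign σ • ∏ i, A (σ i) i = ∏ i, A (σ i) i := by
    intro σ
    rcases Int.units_eq_one_or (Equiv.Perm.sign σ) with hs | hs <;> simp [hs, CharTwo.neg_eq]
  simp_rw [hterm]
  apply Finset.sum_ninvolution (g := fun σ : Equiv.Perm n => σ⁻¹)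
  · intro σ
    have : ∏ i, A (σ⁻¹ i) i = ∏ i, A (σ i) i := by
      rw [← Equiv.prod_comp σ (fun i => A (σ⁻¹ i) i)]
      simp only [Equiv.Perm.inv_def, Equiv.symm_apply_apply]
      exact Finset.prod_congr rfl fun i _ => (hsym i (σ i)).symm
    rw [this]
    exact CharTwo.add_self_eq_zero _
  · intro σ hne
    intro heq
    obtain ⟨i, hi⟩ := invol_exists_fixed σ heq hodd
    exact hne (Finset.prod_eq_zero (Finset.mem_univ i) (by rw [hi, hdiag]))
  · intro σ; exact Finset.mem_univ _
  · intro σ; exact inv_inv σ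

/-- `D(𝐀)` is even iff all diagonal entries of `𝐀` vanish. -/
theorem matFeasible_even_iff_diag_zero {E : Type*} [Fintype E] [DecidableEq E]
    (A : Matrix E E (ZMod 2)) (hA : A.IsSymm) :
    (∀ X ∈ matFeasible A, Even X.card) ↔ (∀ i : E, A i i = 0) := by
  constructor
  · intro h i
    by_contra hii
    have hmem : ({i} : Finset E) ∈ matFeasible A := by
      haveI : Unique (({i} : Finset E) : Type _) :=
        ⟨⟨⟨i, Finset.mem_singleton_self i⟩⟩, by
          rintro ⟨a, ha⟩
          simp only [Finset.mem_singleton] at ha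
          subst ha; rfl⟩
      simp only [matFeasible, Set.mem_setOf_eq, Matrix.det_unique, Matrix.submatrix_apply]
      have hd : ((default : ({i} : Finset E)) : E) = i :=
        Finset.mem_singleton.mp (default : ({i} : Finset E)).2
      rw [hd]
      exact hii
    have := h _ hmem
    simp at this
  · intro hdiag X hX
    by_contra hodd
    rw [Nat.not_even_iff_odd] at hodd
    apply hX
    apply det_eq_zero_of_odd
    · intro i j
      simp only [Matrix.submatrix_apply]
      exact hA.apply (i : E) (j : E)
    · intro i
      exact hdiag i
    · rwa [Fintype.card_coe]
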